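/- Let V be a finite set, A a set of unordered pairs of distinct elements of V, and let E be the set of 3-element subsets {u,v,w} of V such that at least 2 of the pairs {u,v},{v,w},{u,w} belong to A. Let p : V × V → [0,1] satisfy p(u,v) + p(v,u) = 1 whenever {u,v} ∈ A and p(u,v) = p(v,u) = 0 whenever {u,v} ∉ A, and let (x_v)_{v∈V} be nonnegative reals with ∑_{v∈V} x_v = 1. Then ∑_{{u,v,w}∈E} (1 − p(u,v)p(u,w) − p(v,w)p(v,u) − p(w,u)p(w,v))·x_u·x_v·x_w + (1/2)·∑_{{u,v}∈A} (p(u,v)²·x_u²·x_v + p(v,u)²·x_v²·x_u) ≤ ∑_{{u,v,w}∈E} x_u·x_v·x_w + (1/2)·∑_{{u,v}∈A} (x_u²·x_v + x_v²·x_u) − (1/2)·(∑_{{u,v}∈A} x_u·x_v)². -/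

import Mathlib

open Finset

/-- The 3-graph associated with a graph `A` on `V`: all 3-element subsets `t` of `V` such that
at least 2 of the three pairs inside `t` belong to `A`. -/
def triEdges {V : Type*} [Fintype V] [DecidableEq V] (A : Finset (Finset V)) :
    Finset (Finset V) :=
  Finset.univ.filter fun t : Finset V =>
    t.card = 3 ∧ 2 ≤ ((t.powersetCard 2).filter (· ∈ A)).card

lemma pairsum {V : Type*} [DecidableEq V] (u : Finset V) (g : V → ℝ) :
    ∑ s ∈ u.powersetCard 2, ∏ b ∈ s, g b
      = (1/2) * ∑ w ∈ u, ∑ w' ∈ u.erase w, g w * g w' := by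
  induction u using Finset.induction with
  | empty =>
    rw [show (powersetCard 2 (∅:Finset V)) = ∅ by simp]
    simp
  | @insert a u ha ih =>
    rw [show (2:ℕ) = Nat.succ 1 from rfl, powersetCard_succ_insert ha]
    rw [sum_union]
    · rw [sum_image]
      · rw [powersetCard_one, sum_map]
        simp only [Function.Embedding.coeFn_mk]
        have h1 : ∀ w ∈ u, ∏ b ∈ insert a {w}, g b = g a * g w := by
          intro w hw
          rw [prod_insert (by simp; rintro rfl; exact ha hw), prod_singleton]
        rw [sum_congr rfl h1, ih]
        rw [sum_insert ha]
        rw [erase_insert ha]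
        have h2 : ∀ w ∈ u, ∑ w' ∈ (insert a u).erase w, g w * g w'
            = g w * g a + ∑ w' ∈ u.erase w, g w * g w' := by
          intro w hw
          have he : (insert a u).erase w = insert a (u.erase w) := by
            rw [erase_insert_of_ne (by rintro rfl; exact ha hw)]
          rw [he, sum_insert (by simp [ha])]
        rw [sum_congr rfl h2, sum_add_distrib, mul_sum]
        have h3 : ∑ w ∈ u, g w * g a = g a * ∑ w ∈ u, g w := by
          rw [mul_sum]; exact sum_congr rfl fun w _ => mul_comm _ _
        rw [h3, ← mul_sum, ← mul_sum]
        ring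
      · intro s hs t ht hst
        simp only [mem_coe, mem_powersetCard] at hs ht
        have hsa : a ∉ s := fun h => ha (hs.1 h)
        have hta : a ∉ t := fun h => ha (ht.1 h)
        have := congrArg (fun z => z.erase a) hst
        simpa [erase_insert hsa, erase_insert hta] using this
    · rw [disjoint_right]
      intro s hs hs'
      simp only [mem_image] at hs
      obtain ⟨t, ht, rfl⟩ := hs
      exact ha ((mem_powersetCard.1 hs').1 (mem_insert_self a t))

lemma trisum {V : Type*} [Fintype V] [DecidableEq V] (h : V → Finset V → ℝ) :
    ∑ t ∈ Finset.univ.powersetCard 3, ∑ a ∈ t, h a (t.erase a)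
      = ∑ a : V, ∑ s ∈ (Finset.univ.erase a).powersetCard 2, h a s := by
  rw [Finset.sum_sigma', Finset.sum_sigma']
  refine Finset.sum_nbij' (fun q => ⟨q.2, q.1.erase q.2⟩) (fun q => ⟨insert q.1 q.2, q.1⟩)
    ?_ ?_ ?_ ?_ ?_
  · rintro ⟨t, a⟩ hq
    simp only [mem_sigma, mem_powersetCard_univ] at hq ⊢
    obtain ⟨hc, hat⟩ := hq
    refine ⟨mem_univ _, ?_⟩
    rw [mem_powersetCard]
    constructor
    · intro b hb
      simp only [mem_erase] at hb ⊢
      exact ⟨hb.1, mem_univ _⟩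
    · rw [card_erase_of_mem hat, hc]
  · rintro ⟨a, s⟩ hq
    simp only [mem_sigma, mem_powersetCard] at hq ⊢
    obtain ⟨-, hs, hc⟩ := hq
    have has : a ∉ s := fun h => (mem_erase.1 (hs h)).1 rfl
    exact ⟨⟨subset_univ _, by rw [card_insert_of_notMem has, hc]⟩, mem_insert_self _ _⟩
  · rintro ⟨t, a⟩ hq
    simp only [mem_sigma, mem_powersetCard_univ] at hq
    simp [Finset.insert_erase hq.2]
  · rintro ⟨a, s⟩ hq
    simp only [mem_sigma, mem_powersetCard] at hq
    have has : a ∉ s := fun h => (mem_erase.1 (hq.2.1 h)).1 rfl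
    simp [Finset.erase_insert has]
  · rintro ⟨t, a⟩ hq
    rfl

lemma edgesum {V : Type*} [Fintype V] [DecidableEq V] (A : Finset (Finset V))
    (hA : ∀ e ∈ A, e.card = 2) (f : V → V → ℝ)
    (hf : ∀ v w, ({v, w} : Finset V) ∉ A → f v w = 0) :
    ∑ e ∈ A, ∑ a ∈ e, ∑ b ∈ e.erase a, f a b = ∑ v : V, ∑ w : V, f v w := by
  have pair_eq : ∀ e ∈ A, ∀ a ∈ e, ∀ b ∈ e.erase a, ({a, b} : Finset V) = e := by
    intro e heA a hae b hbe
    have hba : b ≠ a := (mem_erase.1 hbe).1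
    have hsub : ({a, b} : Finset V) ⊆ e := by
      intro c hc
      rcases mem_insert.1 hc with rfl | hc
      · exact hae
      · exact (mem_singleton.1 hc) ▸ (mem_erase.1 hbe).2
    have hcard : ({a, b} : Finset V).card = 2 := by
      rw [card_insert_of_notMem (by simp [hba.symm]), card_singleton]
    exact Finset.eq_of_subset_of_card_le hsub (by rw [hA e heA, hcard])
  calc ∑ e ∈ A, ∑ a ∈ e, ∑ b ∈ e.erase a, f a b
      = ∑ q ∈ A.sigma (fun e => e), ∑ b ∈ q.1.erase q.2, f q.2 b :=
        (Finset.sum_sigma A (fun e => e) (fun q => ∑ b ∈ q.1.erase q.2, f q.2 b)).symm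
    _ = ∑ r ∈ (A.sigma (fun e => e)).sigma (fun q => q.1.erase q.2), f r.1.2 r.2 :=
        (Finset.sum_sigma (A.sigma (fun e => e)) (fun q => q.1.erase q.2)
          (fun r => f r.1.2 r.2)).symm
    _ = ∑ q ∈ (Finset.univ ×ˢ Finset.univ).filter
          (fun q : V × V => ({q.1, q.2} : Finset V) ∈ A), f q.1 q.2 := by
        refine Finset.sum_nbij' (fun r => (r.1.2, r.2))
          (fun q => ⟨⟨({q.1, q.2} : Finset V), q.1⟩, q.2⟩) ?_ ?_ ?_ ?_ ?_
        · rintro ⟨⟨e, a⟩, b⟩ hr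
          simp only [mem_sigma] at hr
          obtain ⟨⟨heA, hae⟩, hbe⟩ := hr
          simp only [mem_filter, mem_product]
          exact ⟨⟨mem_univ _, mem_univ _⟩, (pair_eq e heA a hae b hbe) ▸ heA⟩
        · rintro ⟨v, w⟩ hq
          simp only [mem_filter, mem_product] at hq
          have hvw : v ≠ w := by
            intro h; subst h
            have := hA _ hq.2
            simp at this
          simp only [mem_sigma]
          exact ⟨⟨hq.2, mem_insert_self _ _⟩, by simp [hvw.symm]⟩
        · rintro ⟨⟨e, a⟩, b⟩ hr
          simp only [mem_sigma] at hr
          obtain ⟨⟨heA, hae⟩, hbe⟩ := hr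
          have he := pair_eq e heA a hae b hbe
          subst he
          rfl
        · rintro ⟨v, w⟩ hq
          rfl
        · rintro ⟨⟨e, a⟩, b⟩ hr
          rfl
    _ = ∑ v : V, ∑ w : V, f v w := by
        rw [← Finset.sum_product']
        rw [Finset.sum_filter_of_ne]
        intro q _ hne
        by_contra hq
        exact hne (hf q.1 q.2 hq)

theorem stmt_14 {V : Type*} [Fintype V] [DecidableEq V] (A : Finset (Finset V))
    (hA : ∀ e ∈ A, e.card = 2) (p : V × V → ℝ)
    (hp01 : ∀ q : V × V, 0 ≤ p q ∧ p q ≤ 1)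
    (hp1 : ∀ u v : V, ({u, v} : Finset V) ∈ A → p (u, v) + p (v, u) = 1)
    (hp0 : ∀ u v : V, ({u, v} : Finset V) ∉ A → p (u, v) = 0 ∧ p (v, u) = 0)
    (x : V → ℝ) (hx : ∀ v, 0 ≤ x v) (hsum : ∑ v, x v = 1) :
    (∑ t ∈ triEdges A, (1 - ∑ a ∈ t, ∏ b ∈ t.erase a, p (a, b)) * ∏ v ∈ t, x v)
      + (1 / 2) * ∑ e ∈ A, ∑ a ∈ e, ∑ b ∈ e.erase a, p (a, b) ^ 2 * x a ^ 2 * x b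
    ≤ (∑ t ∈ triEdges A, ∏ v ∈ t, x v)
      + (1 / 2) * ∑ e ∈ A, ∑ a ∈ e, ∑ b ∈ e.erase a, x a ^ 2 * x b
      - (1 / 2) * (∑ e ∈ A, ∏ v ∈ e, x v) ^ 2 := by
  classical
  set T : ℝ := ∑ t ∈ triEdges A, (∑ a ∈ t, ∏ b ∈ t.erase a, p (a, b)) * ∏ v ∈ t, x v with hT
  set S : ℝ := ∑ e ∈ A, ∏ v ∈ e, x v with hSdef
  have hpaa : ∀ a : V, p (a, a) = 0 := by
    intro a
    refine (hp0 a a fun h => ?_).1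
    have := hA _ h
    rw [pair_eq_singleton] at this
    simp at this
  -- z
  set z : V → ℝ := fun v => ∑ w : V, p (v, w) * x w with hz
  -- S as a vertex sum
  have hS : S = ∑ v : V, x v * z v := by
    have h1 : ∀ e ∈ A, ∑ a ∈ e, ∑ b ∈ e.erase a, p (a, b) * (x a * x b) = ∏ v ∈ e, x v := by
      intro e he
      obtain ⟨u, v, huv, rfl⟩ := Finset.card_eq_two.1 (hA e he)
      rw [sum_pair huv, erase_insert (by simp [huv]),
        show ({u, v} : Finset V).erase v = {u} by
          rw [pair_comm, erase_insert (by simp [huv.symm])],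
        sum_singleton, sum_singleton, prod_pair huv]
      have := hp1 u v he
      linear_combination (x u * x v) * this
    rw [hSdef, ← sum_congr rfl h1,
      edgesum A hA (fun a b => p (a, b) * (x a * x b))
        (fun a b hab => by
          show p (a, b) * (x a * x b) = 0
          rw [(hp0 a b hab).1]; ring)]
    refine sum_congr rfl fun v _ => ?_
    rw [hz, mul_sum]
    exact sum_congr rfl fun w _ => by ring
  -- Cauchy-Schwarz
  have hCauchy : S ^ 2 ≤ ∑ v : V, x v * z v ^ 2 := by
    have h := Finset.sum_mul_sq_le_sq_mul_sq Finset.univ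
      (fun v => Real.sqrt (x v)) (fun v => Real.sqrt (x v) * z v)
    have e1 : ∀ v : V, Real.sqrt (x v) * (Real.sqrt (x v) * z v) = x v * z v := by
      intro v
      rw [← mul_assoc, Real.mul_self_sqrt (hx v)]
    have e2 : ∀ v : V, Real.sqrt (x v) ^ 2 = x v := fun v => Real.sq_sqrt (hx v)
    have e3 : ∀ v : V, (Real.sqrt (x v) * z v) ^ 2 = x v * z v ^ 2 := by
      intro v
      rw [mul_pow, e2 v]
    rw [sum_congr rfl (fun v _ => e1 v), sum_congr rfl (fun v _ => e2 v),
      sum_congr rfl (fun v _ => e3 v), hsum, one_mul] at h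
    rw [hS]
    exact h
  -- expand ∑ x z^2
  set C : ℝ := ∑ v : V, x v * ∑ w : V, ∑ w' ∈ Finset.univ.erase w,
      (p (v, w) * x w) * (p (v, w') * x w') with hC
  set D : ℝ := ∑ v : V, ∑ w : V, p (v, w) ^ 2 * (x v * x w ^ 2) with hD
  have hR : ∑ v : V, x v * z v ^ 2 = D + C := by
    rw [hD, hC, ← sum_add_distrib]
    refine sum_congr rfl fun v _ => ?_
    have hzz : z v ^ 2 = ∑ w : V, ∑ w' : V, (p (v, w) * x w) * (p (v, w') * x w') := by
      rw [sq, hz, Finset.sum_mul_sum]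
    have hsplit : ∀ w : V, ∑ w' : V, (p (v, w) * x w) * (p (v, w') * x w')
        = (p (v, w) * x w) * (p (v, w) * x w)
          + ∑ w' ∈ Finset.univ.erase w, (p (v, w) * x w) * (p (v, w') * x w') :=
      fun w => (Finset.add_sum_erase Finset.univ _ (mem_univ w)).symm
    rw [hzz, sum_congr rfl fun w _ => hsplit w, sum_add_distrib, mul_add, mul_sum]
    congr 1
    exact sum_congr rfl fun w _ => by ring
  -- T over all 3-subsets
  have hTall : T = ∑ t ∈ Finset.univ.powersetCard 3,
      (∑ a ∈ t, ∏ b ∈ t.erase a, p (a, b)) * ∏ v ∈ t, x v := by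
    refine Finset.sum_subset ?_ ?_
    · intro t ht
      rw [mem_powersetCard_univ]
      exact ((Finset.mem_filter.1 ht).2).1
    · intro t ht hnt
      rw [mem_powersetCard_univ] at ht
      have hcond : ¬ (2 ≤ ((t.powersetCard 2).filter (· ∈ A)).card) := by
        intro hc
        exact hnt (Finset.mem_filter.2 ⟨mem_univ _, ht, hc⟩)
      have : ∑ a ∈ t, ∏ b ∈ t.erase a, p (a, b) = 0 := by
        refine Finset.sum_eq_zero fun a hat => ?_
        have hcard : (t.erase a).card = 2 := by
          rw [card_erase_of_mem hat, ht]
        obtain ⟨b, c, hbc, hbceq⟩ := Finset.card_eq_two.1 hcard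
        rw [hbceq, prod_pair hbc]
        have hbt : b ∈ t.erase a := hbceq ▸ mem_insert_self _ _
        have hct : c ∈ t.erase a := hbceq ▸ (by simp)
        by_contra hne
        have hb0 : p (a, b) ≠ 0 := fun h => hne (by rw [h, zero_mul])
        have hc0 : p (a, c) ≠ 0 := fun h => hne (by rw [h, mul_zero])
        have hbA : ({a, b} : Finset V) ∈ A := by
          by_contra h
          exact hb0 (hp0 a b h).1
        have hcA : ({a, c} : Finset V) ∈ A := by
          by_contra h
          exact hc0 (hp0 a c h).1
        have hab : a ≠ b := fun h => (mem_erase.1 hbt).1 h.symm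
        have hac : a ≠ c := fun h => (mem_erase.1 hct).1 h.symm
        have hmem1 : ({a, b} : Finset V) ∈ (t.powersetCard 2).filter (· ∈ A) := by
          rw [mem_filter, mem_powersetCard]
          refine ⟨⟨?_, ?_⟩, hbA⟩
          · intro y hy
            rcases mem_insert.1 hy with rfl | hy
            · exact hat
            · exact mem_of_mem_erase ((mem_singleton.1 hy) ▸ hbt)
          · rw [card_insert_of_notMem (by simp [hab]), card_singleton]
        have hmem2 : ({a, c} : Finset V) ∈ (t.powersetCard 2).filter (· ∈ A) := by
          rw [mem_filter, mem_powersetCard]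
          refine ⟨⟨?_, ?_⟩, hcA⟩
          · intro y hy
            rcases mem_insert.1 hy with rfl | hy
            · exact hat
            · exact mem_of_mem_erase ((mem_singleton.1 hy) ▸ hct)
          · rw [card_insert_of_notMem (by simp [hac]), card_singleton]
        have hneq : ({a, b} : Finset V) ≠ ({a, c} : Finset V) := by
          intro h
          have : c ∈ ({a, b} : Finset V) := h ▸ (by simp)
          rcases mem_insert.1 this with h' | h'
          · exact hac h'.symm
          · exact hbc ((mem_singleton.1 h')).symm
        have : 2 ≤ ((t.powersetCard 2).filter (· ∈ A)).card := by
          have hsub2 : ({({a, b} : Finset V), ({a, c} : Finset V)} : Finset (Finset V))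
              ⊆ (t.powersetCard 2).filter (· ∈ A) := by
            intro y hy
            rcases mem_insert.1 hy with rfl | hy
            · exact hmem1
            · exact (mem_singleton.1 hy) ▸ hmem2
          calc 2 = ({({a, b} : Finset V), ({a, c} : Finset V)} : Finset (Finset V)).card := by
                rw [card_insert_of_notMem (by simp [hneq]), card_singleton]
            _ ≤ _ := Finset.card_le_card hsub2
        exact hcond this
      rw [this, zero_mul]
  -- C = 2T
  have inner_eq : ∀ a : V,
      ∑ s ∈ (Finset.univ.erase a).powersetCard 2,
          (∏ b ∈ s, p (a, b)) * (x a * ∏ b ∈ s, x b)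
        = x a * ((1/2) * ∑ w : V, ∑ w' ∈ Finset.univ.erase w,
            (p (a, w) * x w) * (p (a, w') * x w')) := by
    intro a
    have e1 : ∀ s ∈ (Finset.univ.erase a).powersetCard 2,
        (∏ b ∈ s, p (a, b)) * (x a * ∏ b ∈ s, x b)
          = x a * ∏ b ∈ s, (p (a, b) * x b) := by
      intro s hs
      rw [prod_mul_distrib]
      ring
    rw [sum_congr rfl e1, ← mul_sum, pairsum (Finset.univ.erase a) (fun w => p (a, w) * x w)]
    have hga : p (a, a) * x a = 0 := by rw [hpaa a, zero_mul]
    have hinner : ∀ w ∈ Finset.univ.erase a,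
        ∑ w' ∈ (Finset.univ.erase a).erase w, (p (a, w) * x w) * (p (a, w') * x w')
          = ∑ w' ∈ Finset.univ.erase w, (p (a, w) * x w) * (p (a, w') * x w') := by
      intro w hw
      refine Finset.sum_subset ?_ ?_
      · intro y hy
        exact mem_erase.2 ⟨(mem_erase.1 hy).1, mem_univ _⟩
      · intro y hy hny
        have hya : y = a := by
          by_contra h
          exact hny (mem_erase.2 ⟨(mem_erase.1 hy).1, mem_erase.2 ⟨h, mem_univ _⟩⟩)
        rw [hya, hga, mul_zero]
    rw [sum_congr rfl hinner]
    congr 1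
    congr 1
    refine Finset.sum_subset (erase_subset _ _) ?_
    intro y _ hny
    have hya : y = a := by
      by_contra h
      exact hny (mem_erase.2 ⟨h, mem_univ _⟩)
    rw [hya]
    exact Finset.sum_eq_zero fun w' _ => by rw [hga, zero_mul]
  have hCT : C = 2 * T := by
    have step1 : ∑ t ∈ Finset.univ.powersetCard 3,
        (∑ a ∈ t, ∏ b ∈ t.erase a, p (a, b)) * ∏ v ∈ t, x v
        = ∑ t ∈ Finset.univ.powersetCard 3, ∑ a ∈ t,
            (∏ b ∈ t.erase a, p (a, b)) * (x a * ∏ b ∈ t.erase a, x b) := by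
      refine sum_congr rfl fun t ht => ?_
      rw [sum_mul]
      refine sum_congr rfl fun a hat => ?_
      rw [Finset.mul_prod_erase t x hat]
    rw [hC, hTall, step1, trisum (fun a s => (∏ b ∈ s, p (a, b)) * (x a * ∏ b ∈ s, x b)),
      sum_congr rfl (fun a _ => inner_eq a), mul_sum]
    exact sum_congr rfl fun v _ => by ring
  -- D as an edge sum
  have hD' : D = ∑ e ∈ A, ∑ a ∈ e, ∑ b ∈ e.erase a, p (a, b) ^ 2 * (x a * x b ^ 2) :=
    (edgesum A hA (fun a b => p (a, b) ^ 2 * (x a * x b ^ 2))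
      (fun a b hab => by
        show p (a, b) ^ 2 * (x a * x b ^ 2) = 0
        rw [(hp0 a b hab).1]; ring)).symm
  -- per-edge inequality
  have hE : ∑ e ∈ A, ∑ a ∈ e, ∑ b ∈ e.erase a, p (a, b) ^ 2 * (x a * x b ^ 2)
      ≤ ∑ e ∈ A, ∑ a ∈ e, ∑ b ∈ e.erase a, (1 - p (a, b) ^ 2) * (x a ^ 2 * x b) := by
    refine Finset.sum_le_sum fun e he => ?_
    obtain ⟨u, v, huv, rfl⟩ := Finset.card_eq_two.1 (hA e he)
    have her1 : ({u, v} : Finset V).erase u = {v} := erase_insert (by simp [huv])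
    have her2 : ({u, v} : Finset V).erase v = {u} := by
      rw [pair_comm]
      exact erase_insert (by simp [huv.symm])
    simp only [sum_pair huv, her1, her2, sum_singleton]
    have h1 := hp1 u v he
    have h2 := (hp01 (u, v)).1
    have h3 := (hp01 (u, v)).2
    have h4 := (hp01 (v, u)).1
    have h5 := (hp01 (v, u)).2
    have hsq : p (u, v) ^ 2 + p (v, u) ^ 2 ≤ 1 := by nlinarith
    nlinarith [mul_nonneg (mul_nonneg (hx u) (hx v)) (add_nonneg (hx u) (hx v)),
      mul_nonneg (sub_nonneg.2 hsq)
        (mul_nonneg (mul_nonneg (hx u) (hx v)) (add_nonneg (hx u) (hx v)))]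
  -- final assembly
  have hsplitT : ∑ t ∈ triEdges A, (1 - ∑ a ∈ t, ∏ b ∈ t.erase a, p (a, b)) * ∏ v ∈ t, x v
      = (∑ t ∈ triEdges A, ∏ v ∈ t, x v) - T := by
    rw [hT, ← sum_sub_distrib]
    exact sum_congr rfl fun t _ => by ring
  have hsplitQ : ∑ e ∈ A, ∑ a ∈ e, ∑ b ∈ e.erase a, (1 - p (a, b) ^ 2) * (x a ^ 2 * x b)
      = (∑ e ∈ A, ∑ a ∈ e, ∑ b ∈ e.erase a, x a ^ 2 * x b)
        - ∑ e ∈ A, ∑ a ∈ e, ∑ b ∈ e.erase a, p (a, b) ^ 2 * x a ^ 2 * x b := by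
    rw [← sum_sub_distrib]
    refine sum_congr rfl fun e _ => ?_
    rw [← sum_sub_distrib]
    refine sum_congr rfl fun a _ => ?_
    rw [← sum_sub_distrib]
    exact sum_congr rfl fun b _ => by ring
  rw [hsplitT]
  linarith [hCauchy, hR, hCT, hD', hE, hsplitQ]
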